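/- For real numbers b with 0 < b ≠ 1 and the unique solution x of the equation (x-a)^{m₁-m₂} b^{m₁-m₂} = (x-b)^{m₁-m₂} a^{m₁-m₂} with a < x < b, 0 < a < b, and m₁ - m₂ a positive integer: x = 2ab/(a+b). -/
import Mathlib

theorem stmt8 (m₁ m₂ : ℕ) (hm : m₂ < m₁) (a b : ℝ) (ha : 0 < a) (hab : a < b)
    (x : ℝ) (hx : x ∈ Set.Ioo a b)
    (heq : (x - a) ^ (m₁ - m₂) * b ^ (m₁ - m₂) = (x - b) ^ (m₁ - m₂) * a ^ (m₁ - m₂)) :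
    x = 2 * a * b / (a + b) := by
  obtain ⟨hxa, hxb⟩ := hx
  set n := m₁ - m₂ with hn
  have hn1 : n ≠ 0 := Nat.sub_ne_zero_of_lt hm
  have hb : 0 < b := ha.trans hab
  have hu : 0 < (x - a) * b := by nlinarith
  have hv : (x - b) * a < 0 := by nlinarith
  have heq' : ((x - a) * b) ^ n = ((x - b) * a) ^ n := by
    rw [mul_pow, mul_pow]; exact heq
  have habs : |(x - a) * b| = |(x - b) * a| := by
    have := congrArg abs heq'
    rw [abs_pow, abs_pow] at this
    exact (pow_left_inj₀ (abs_nonneg _) (abs_nonneg _) hn1).mp this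
  have key : (x - a) * b = -((x - b) * a) := by
    rwa [abs_of_pos hu, abs_of_neg hv] at habs
  have hab0 : a + b ≠ 0 := by positivity
  field_simp
  nlinarith [key]
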